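/- Let M ≥ 1, let P_{ij}, D_{ij} ≥ 0 (1 ≤ i,j ≤ M) and A_i ∈ ℝ be fixed, and let δ > 0. Suppose that for all sufficiently small h > 0 there are vectors y(h), σ(h) ∈ ℝ^M with δ ≤ y_i(h) ≤ 1/δ for all i, such that σ_i(h) − y_i(h) = O(h²) as h → 0⁺ and y satisfies y_i(h) = A_i + (3/2) h ( Σ_j P_{ij} y_j(h)/σ_j(h) − Σ_j D_{ij} y_i(h)/σ_i(h) ) for every i. Then y_i(h) = A_i + (3/2) h ( Σ_j P_{ij} − Σ_j D_{ij} ) + O(h³) as h → 0⁺, for every i. -/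

import Mathlib

open Filter Asymptotics Topology

/-- The sufficient condition `σ = y + O(h²)` forces the second-order MP multistep
step to agree with the underlying explicit step up to `O(h³)`: if for all small
`h > 0` the implicit solution `y h` is bounded between `δ` and `1/δ`, satisfies
the Patankar fixed-point system with data `A`, and `σ h i − y h i = O(h²)`, then
`y h i = A i + (3/2) h (∑ j, P i j − ∑ j, D i j) + O(h³)` for every `i`. -/
theorem mpms2_accuracy_mechanism
    (M : ℕ) (hM : 1 ≤ M)
    (P D : Fin M → Fin M → ℝ)
    (hP : ∀ i j, 0 ≤ P i j) (hD : ∀ i j, 0 ≤ D i j)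
    (A : Fin M → ℝ) (δ : ℝ) (hδ : 0 < δ)
    (y σ : ℝ → Fin M → ℝ)
    (hbound : ∀ᶠ h in 𝓝[>] (0:ℝ), ∀ i, δ ≤ y h i ∧ y h i ≤ 1/δ)
    (hσ : ∀ i, (fun h : ℝ => σ h i - y h i) =O[𝓝[>] (0:ℝ)] fun h : ℝ => h ^ 2)
    (hsys : ∀ᶠ h in 𝓝[>] (0:ℝ), ∀ i,
      y h i = A i + (3/2) * h *
        (∑ j, P i j * y h j / σ h j - ∑ j, D i j * y h i / σ h i)) :
    ∀ i, (fun h : ℝ =>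
        y h i - (A i + (3/2) * h * (∑ j, P i j - ∑ j, D i j)))
      =O[𝓝[>] (0:ℝ)] fun h : ℝ => h ^ 3 := by
  -- big-O bound for y/σ - 1
  have gO : ∀ j, (fun h : ℝ => y h j / σ h j - 1) =O[𝓝[>] (0:ℝ)]
      fun h : ℝ => h ^ 2 := by
    intro j
    rcases (hσ j).exists_pos with ⟨C, hCpos, hC⟩
    have hsmall : ∀ᶠ h in 𝓝[>] (0:ℝ), C * ‖(h:ℝ) ^ 2‖ < δ / 2 := by
      have hcont : Tendsto (fun h : ℝ => C * ‖h ^ 2‖) (𝓝[>] (0:ℝ)) (𝓝 0) := by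
        have : Continuous fun h : ℝ => C * ‖h ^ 2‖ := by continuity
        have := (this.tendsto 0).mono_left (nhdsWithin_le_nhds (s := Set.Ioi (0:ℝ)))
        simpa using this
      exact hcont.eventually (gt_mem_nhds (by linarith : (0:ℝ) < δ / 2))
    rw [isBigO_iff]
    refine ⟨2 * C / δ, ?_⟩
    filter_upwards [hC.bound, hsmall, hbound] with h h1 h2 h3
    have hy : δ ≤ y h j := (h3 j).1
    have hσpos : δ / 2 < σ h j := by
      have : |σ h j - y h j| ≤ C * ‖h ^ 2‖ := h1
      have := abs_le.mp this
      linarith [this.1]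
    have hσ0 : σ h j ≠ 0 := by linarith
    have heq : y h j / σ h j - 1 = (y h j - σ h j) / σ h j := by field_simp
    rw [heq, norm_div]
    have hn : ‖y h j - σ h j‖ = ‖σ h j - y h j‖ := norm_sub_rev _ _
    have hσn : ‖σ h j‖ = σ h j := Real.norm_of_nonneg (by linarith)
    rw [hn, hσn]
    have hle : ‖σ h j - y h j‖ / σ h j ≤ (C * ‖h ^ 2‖) / (δ / 2) :=
      div_le_div₀ (by positivity) h1 (by linarith) (le_of_lt hσpos)
    calc ‖σ h j - y h j‖ / σ h j ≤ (C * ‖h ^ 2‖) / (δ / 2) := hle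
      _ = 2 * C / δ * ‖h ^ 2‖ := by field_simp
  intro i
  -- eventual equality of the error with an explicit expression
  have heq : (fun h : ℝ =>
        y h i - (A i + (3/2) * h * (∑ j, P i j - ∑ j, D i j)))
      =ᶠ[𝓝[>] (0:ℝ)] fun h : ℝ => (3/2) * h *
        (∑ j, P i j * (y h j / σ h j - 1) - ∑ j, D i j * (y h i / σ h i - 1)) := by
    filter_upwards [hsys] with h hs
    have e1 : ∀ j, P i j * (y h j / σ h j - 1) = P i j * y h j / σ h j - P i j := by
      intro j; rw [mul_sub, mul_one, mul_div_assoc]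
    have e2 : ∀ j, D i j * (y h i / σ h i - 1) = D i j * y h i / σ h i - D i j := by
      intro j; rw [mul_sub, mul_one, mul_div_assoc]
    simp only [e1, e2, Finset.sum_sub_distrib]
    linear_combination hs i
  refine heq.trans_isBigO ?_
  have hS : (fun h : ℝ =>
      ∑ j, P i j * (y h j / σ h j - 1) - ∑ j, D i j * (y h i / σ h i - 1))
      =O[𝓝[>] (0:ℝ)] fun h : ℝ => h ^ 2 := by
    refine IsBigO.sub ?_ ?_
    · exact IsBigO.fun_sum fun j _ => (gO j).const_mul_left (P i j)
    · exact IsBigO.fun_sum fun j _ => (gO i).const_mul_left (D i j)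
  have hh : (fun h : ℝ => (3/2) * h) =O[𝓝[>] (0:ℝ)] fun h : ℝ => h :=
    (isBigO_refl _ _).const_mul_left _
  have := hh.mul hS
  refine this.congr (fun h => by ring) (fun h => by ring)
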